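/- The map ρ restricts to a bijection of {1, 2, …, m−1} onto itself; in fact ρ(i) = [(m−i)·n̄]_m where n·n̄ ≡ 1 (mod m). Moreover, for every i with 1 ≤ i ≤ m−1 one has w_{ρ(i)} = u_{σ(i)} − 1. -/

import Mathlib

/-- coprimality from a multiplicative inverse mod n (n ≥ 2). -/
lemma coprime_of_mul_modEq_one' (a b n : ℕ) (hn : 2 ≤ n) (h : a * b ≡ 1 [MOD n]) :
    Nat.gcd n b = 1 := by
  have hab : 1 ≤ a * b := by
    by_contra hc
    push_neg at hc
    interval_cases h' : a * b
    · have : (0 : ℕ) % n = 1 % n := h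
      rw [Nat.zero_mod, Nat.mod_eq_of_lt (by omega)] at this
      omega
  have hdvd : n ∣ a * b - 1 := (Nat.modEq_iff_dvd' hab).mp h.symm
  obtain ⟨t, ht⟩ := hdvd
  have h1 : Nat.gcd n b ∣ a * b := Dvd.dvd.mul_left (Nat.gcd_dvd_right n b) a
  have h2 : Nat.gcd n b ∣ n * t := Dvd.dvd.mul_right (Nat.gcd_dvd_left n b) t
  have h3 : Nat.gcd n b ∣ a * b - n * t := Nat.dvd_sub h1 h2
  have h4 : a * b - n * t = 1 := by omega
  rw [h4] at h3
  exact Nat.eq_one_of_dvd_one h3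

/-- With `k` the increasing enumeration of `𝔉(m,n)`,
`u j`, `w j` the indices with `k (u j) = j*m`, `k (w j) = j*n`,
`σ i = [i * m̄]_n` (`m̄` an inverse of `m` mod `n`) and
`ρ i = (σ i * m - i) / n` (an integer):  `ρ` restricts to a bijection of
`{1, …, m-1}` onto itself, in fact `ρ i = [(m - i) * n̄]_m` where `n̄` is
an inverse of `n` mod `m`, and `w (ρ i) = u (σ i) - 1` for
`1 ≤ i ≤ m-1`. -/
theorem rho_bijection (m n : ℕ) (hm : 2 ≤ m) (hmn : m < n)
    (hcop : Nat.Coprime m n) (k : ℕ → ℕ)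
    (hmono : ∀ i j : ℕ, i < j → j < m + n → k i < k j)
    (hmem : ∀ x : ℕ, ((m ∣ x ∨ n ∣ x) ∧ x ≤ m * n) ↔ ∃ i < m + n, k i = x)
    (u w : ℕ → ℕ)
    (hu : ∀ j ≤ n, u j < m + n ∧ k (u j) = j * m)
    (hw : ∀ j ≤ m, w j < m + n ∧ k (w j) = j * n)
    (mbar : ℕ) (hmbar : m * mbar ≡ 1 [MOD n])
    (σ : ℕ → ℕ) (hσ : ∀ i, σ i = i * mbar % n)
    (ρ : ℕ → ℕ) (hρ : ∀ i, ρ i = (σ i * m - i) / n)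
    (nbar : ℕ) (hnbar : n * nbar ≡ 1 [MOD m]) :
    Set.BijOn ρ (Set.Icc 1 (m - 1)) (Set.Icc 1 (m - 1)) ∧
    (∀ i, 1 ≤ i → i ≤ m - 1 → ρ i = (m - i) * nbar % m) ∧
    (∀ i, 1 ≤ i → i ≤ m - 1 → w (ρ i) = u (σ i) - 1) := by
  have hn2 : 2 ≤ n := by omega
  have hcop_mbar : Nat.gcd n mbar = 1 := coprime_of_mul_modEq_one' m mbar n hn2 hmbar
  have hcop_nbar : Nat.gcd m nbar = 1 := coprime_of_mul_modEq_one' n nbar m hm hnbar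
  -- core numeric facts
  have key : ∀ i, 1 ≤ i → i ≤ m - 1 →
      1 ≤ σ i ∧ σ i ≤ n - 1 ∧ ρ i * n + i = σ i * m ∧ 1 ≤ ρ i ∧ ρ i ≤ m - 1 := by
    intro i hi1 hi2
    have him : i < m := by omega
    have hσlt : σ i < n := by rw [hσ]; exact Nat.mod_lt _ (by omega)
    have hσpos : 1 ≤ σ i := by
      rcases Nat.eq_zero_or_pos (σ i) with h | h
      · exfalso
        rw [hσ] at h
        have hdvd : n ∣ i * mbar := Nat.dvd_of_mod_eq_zero h
        have : n ∣ i := (Nat.Coprime.dvd_of_dvd_mul_right hcop_mbar) hdvd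
        have := Nat.le_of_dvd (by omega) this
        omega
      · exact h
    have hmod : σ i * m ≡ i [MOD n] := by
      calc σ i * m = i * mbar % n * m := by rw [hσ]
        _ ≡ i * mbar * m [MOD n] := Nat.ModEq.mul_right m (Nat.mod_modEq _ n)
        _ = i * (m * mbar) := by ring
        _ ≡ i * 1 [MOD n] := Nat.ModEq.mul_left i hmbar
        _ = i := by ring
    have hmle : m ≤ σ i * m := by
      calc m = 1 * m := (one_mul m).symm
        _ ≤ σ i * m := Nat.mul_le_mul_right m hσpos
    have hile : i ≤ σ i * m := by omega
    have hdvd : n ∣ σ i * m - i := (Nat.modEq_iff_dvd' hile).mp hmod.symm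
    have hρn : ρ i * n = σ i * m - i := by
      rw [hρ]; exact Nat.div_mul_cancel hdvd
    have hρeq : ρ i * n + i = σ i * m := by omega
    have hρpos : 1 ≤ ρ i := by
      rcases Nat.eq_zero_or_pos (ρ i) with h | h
      · rw [h] at hρeq; simp at hρeq; omega
      · exact h
    have hρlt : ρ i < m := by
      by_contra h
      push_neg at h
      have h1 : m * n ≤ ρ i * n := Nat.mul_le_mul_right n h
      have h2 : σ i * m ≤ (n - 1) * m := Nat.mul_le_mul_right m (by omega)
      have h3 : (n - 1) * m + m = n * m := by
        have : (n - 1) + 1 = n := by omega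
        calc (n - 1) * m + m = ((n - 1) + 1) * m := by ring
          _ = n * m := by rw [this]
      have h4 : m * n = n * m := Nat.mul_comm m n
      omega
    exact ⟨hσpos, by omega, hρeq, hρpos, by omega⟩
  -- claim 2
  have claim2 : ∀ i, 1 ≤ i → i ≤ m - 1 → ρ i = (m - i) * nbar % m := by
    intro i hi1 hi2
    obtain ⟨hσ1, hσ2, hρeq, hρ1, hρ2⟩ := key i hi1 hi2
    have hzero : σ i * m ≡ m [MOD m] := by
      show σ i * m % m = m % m
      simp [Nat.mul_mod_left, Nat.mod_self]
    have hsum : ρ i * n + i ≡ (m - i) + i [MOD m] := by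
      have h1 : (m - i) + i = m := by omega
      rw [hρeq, h1]; exact hzero
    have h' : ρ i * n ≡ m - i [MOD m] := Nat.ModEq.add_right_cancel' i hsum
    have hfin : ρ i ≡ (m - i) * nbar [MOD m] := by
      calc ρ i = ρ i * 1 := (mul_one _).symm
        _ ≡ ρ i * (n * nbar) [MOD m] := Nat.ModEq.mul_left _ hnbar.symm
        _ = (ρ i * n) * nbar := by ring
        _ ≡ (m - i) * nbar [MOD m] := Nat.ModEq.mul_right nbar h'
    have : ρ i % m = (m - i) * nbar % m := hfin
    rw [← this, Nat.mod_eq_of_lt (by omega)]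
  -- claim 3
  have claim3 : ∀ i, 1 ≤ i → i ≤ m - 1 → w (ρ i) = u (σ i) - 1 := by
    intro i hi1 hi2
    obtain ⟨hσ1, hσ2, hρeq, hρ1, hρ2⟩ := key i hi1 hi2
    obtain ⟨hUlt, hkU⟩ := hu (σ i) (by omega)
    obtain ⟨hWlt, hkW⟩ := hw (ρ i) (by omega)
    have hkWU : k (w (ρ i)) < k (u (σ i)) := by rw [hkU, hkW]; omega
    have hWU : w (ρ i) < u (σ i) := by
      by_contra h
      push_neg at h
      rcases eq_or_lt_of_le h with h | h
      · rw [h] at hkWU; omega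
      · have := hmono _ _ h hWlt; omega
    have hU1 : 1 ≤ u (σ i) := by omega
    have hU1lt : u (σ i) - 1 < m + n := by omega
    have hkmem := (hmem (k (u (σ i) - 1))).mpr ⟨u (σ i) - 1, hU1lt, rfl⟩
    have hklt : k (u (σ i) - 1) < k (u (σ i)) := hmono _ _ (by omega) hUlt
    have hle : k (u (σ i) - 1) ≤ k (w (ρ i)) := by
      by_contra h
      push_neg at h
      rcases hkmem.1 with ⟨j, hj⟩ | ⟨c, hc⟩
      · -- k(U-1) = m*j with ρ i * n < m*j < σ i * m
        have hjσ : m * j < m * σ i := by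
          rw [← hj, Nat.mul_comm m (σ i)] at *
          omega
        have hjlt : j < σ i := Nat.lt_of_mul_lt_mul_left hjσ
        have h5 : m * j ≤ m * (σ i - 1) := Nat.mul_le_mul_left m (by omega)
        have h6 : m * (σ i - 1) + m = σ i * m := by
          have : (σ i - 1) + 1 = σ i := by omega
          calc m * (σ i - 1) + m = m * ((σ i - 1) + 1) := by ring
            _ = m * σ i := by rw [this]
            _ = σ i * m := Nat.mul_comm m (σ i)
        rw [hkW] at h
        rw [hj] at h
        omega
      · -- k(U-1) = n*c with ρ i * n < n*c < σ i * m
        rw [hkW, hc] at h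
        have hcc : ρ i * n < c * n := by rw [Nat.mul_comm c n]; omega
        have hclt : ρ i < c := Nat.lt_of_mul_lt_mul_right hcc
        have h5 : (ρ i + 1) * n ≤ c * n := Nat.mul_le_mul_right n (by omega)
        have h6 : (ρ i + 1) * n = ρ i * n + n := by ring
        have h7 : n * c = c * n := Nat.mul_comm n c
        rw [hkU, hc] at hklt
        omega
    have hWge : u (σ i) - 1 ≤ w (ρ i) := by
      by_contra h
      push_neg at h
      have := hmono _ _ h hU1lt
      omega
    omega
  refine ⟨?_, claim2, claim3⟩
  have hmaps : Set.MapsTo ρ (Set.Icc 1 (m - 1)) (Set.Icc 1 (m - 1)) := by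
    intro i hi
    simp only [Set.mem_Icc] at hi ⊢
    obtain ⟨_, _, _, h1, h2⟩ := key i hi.1 hi.2
    exact ⟨h1, h2⟩
  have hinj : Set.InjOn ρ (Set.Icc 1 (m - 1)) := by
    intro a ha b hb hab
    simp only [Set.mem_Icc] at ha hb
    rw [claim2 a ha.1 ha.2, claim2 b hb.1 hb.2] at hab
    have hme : (m - a) * nbar ≡ (m - b) * nbar [MOD m] := hab
    have hcan : (m - a) ≡ (m - b) [MOD m] :=
      Nat.ModEq.cancel_right_of_coprime hcop_nbar hme
    have h1 : (m - a) % m = (m - b) % m := hcan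
    rw [Nat.mod_eq_of_lt (by omega), Nat.mod_eq_of_lt (by omega)] at h1
    omega
  exact (Set.Finite.injOn_iff_bijOn_of_mapsTo (Set.finite_Icc 1 (m - 1)) hmaps).mp hinj
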